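/- Let f be a polynomial over ℂ of degree 3. Then the average of f over the multiset of the 2 roots of f' (counted with multiplicity) equals the value of f at the unique root of f''. Equivalently, (1/2)·∑_{t ∈ roots(f')} f(t) = f(z), where z is the root of f''. -/

import Mathlib

open Polynomial

/-- For any cubic `f` over `ℂ`, the average of `f` over the 2 roots of `f'`
(with multiplicity) equals the value of `f` at the root of `f''`. -/
theorem cubic_mean_value_at_critical_points (f : Polynomial ℂ) (hf : f.degree = 3)
    (z : ℂ) (hz : (derivative (derivative f)).eval z = 0) :
    ((derivative f).roots.map (fun t => f.eval t)).sum / 2 = f.eval z := by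
  have hnd : f.natDegree = 3 := natDegree_eq_of_degree_eq_some hf
  set a := f.coeff 3 with ha
  set b := f.coeff 2 with hb
  set c := f.coeff 1 with hc
  set d := f.coeff 0 with hd
  have ha0 : a ≠ 0 := by
    have := f.coeff_ne_zero_of_eq_degree (n := 3) hf
    simpa using this
  have hd1 : (derivative f).natDegree = 2 := by
    have h := degree_derivative_eq f (by omega)
    rw [hnd] at h
    exact natDegree_eq_of_degree_eq_some h
  have hd2 : (derivative (derivative f)).natDegree = 1 := by
    have h := degree_derivative_eq (derivative f) (by omega)
    rw [hd1] at h
    exact natDegree_eq_of_degree_eq_some h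
  -- eval formulas
  have hev : ∀ t : ℂ, f.eval t = a * t^3 + b * t^2 + c * t + d := by
    intro t
    rw [eval_eq_sum_range' (n := 4) (by omega) t]
    simp [Finset.sum_range_succ]
    ring
  have hev1 : ∀ t : ℂ, (derivative f).eval t = 3*a*t^2 + 2*b*t + c := by
    intro t
    rw [eval_eq_sum_range' (n := 3) (by omega) t]
    simp [Finset.sum_range_succ, coeff_derivative]
    ring
  have hev2 : ∀ t : ℂ, (derivative (derivative f)).eval t = 6*a*t + 2*b := by
    intro t
    rw [eval_eq_sum_range' (n := 2) (by omega) t]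
    simp [Finset.sum_range_succ, coeff_derivative]
    ring
  have hsplit : Splits (derivative f) := IsAlgClosed.splits _
  have hcard : (derivative f).roots.card = 2 := by
    rw [splits_iff_card_roots.mp hsplit, hd1]
  obtain ⟨r, s, hrs⟩ := Multiset.card_eq_two.mp hcard
  have hlc : (derivative f).leadingCoeff = 3 * a := by
    rw [Polynomial.leadingCoeff, hd1, coeff_derivative]
    push_cast; ring
  have hprod := hsplit.eq_prod_roots
  rw [hrs, hlc] at hprod
  have hev1' : ∀ t : ℂ, (derivative f).eval t = 3*a*(t-r)*(t-s) := by
    intro t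
    conv_lhs => rw [hprod]
    simp
    ring
  have hc' : c = 3*a*r*s := by
    have h0 := (hev1 0).symm.trans (hev1' 0)
    linear_combination h0
  have hb' : b = -(3*a*(r+s))/2 := by
    have h1 := (hev1 1).symm.trans (hev1' 1)
    have h0 := (hev1 0).symm.trans (hev1' 0)
    linear_combination (h1 - h0)/2
  have hz' : z = (r+s)/2 := by
    rw [hev2 z, hb'] at hz
    have h6 : (6:ℂ) * a ≠ 0 := by
      intro h; apply ha0; simpa using h
    have h : 6*a*z = 6*a*((r+s)/2) := by linear_combination hz
    exact mul_left_cancel₀ h6 h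
  subst hz'
  rw [hrs]
  simp only [Multiset.insert_eq_cons, Multiset.map_cons, Multiset.map_singleton,
    Multiset.sum_cons, Multiset.sum_singleton]
  rw [hev r, hev s, hev ((r+s)/2), hb', hc']
  ring
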